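/- Let ℓ and ℓ̃ be two positive real-valued functions on the five edges il, lj, jk, ki, ij of the triangulation formed by two triangles ijk and ilj glued along the common edge ij (where i, j, k, l are four distinct vertices). Then there exist real numbers u_i, u_j, u_k, u_l such that ℓ̃_{ab} = e^{(u_a+u_b)/2}·ℓ_{ab} holds for every one of the five edges ab if and only if (ℓ_{il}·ℓ_{jk})/(ℓ_{lj}·ℓ_{ki}) = (ℓ̃_{il}·ℓ̃_{jk})/(ℓ̃_{lj}·ℓ̃_{ki}). -/
import Mathlib


/-- For two triangles `ijk` and `ilj` glued along the edge `ij`, two discrete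
metrics `ℓ` and `ℓ̃` on the five edges are discretely conformally equivalent if
and only if they induce the same length-cross-ratio on the common edge `ij`. -/
theorem two_triangles_conformal_iff_lcr
    (lil llj ljk lki lij til tlj tjk tki tij : ℝ)
    (hil : 0 < lil) (hlj : 0 < llj) (hjk : 0 < ljk) (hki : 0 < lki) (hij : 0 < lij)
    (htil : 0 < til) (htlj : 0 < tlj) (htjk : 0 < tjk) (htki : 0 < tki)
    (htij : 0 < tij) :
    (∃ ui uj uk ul : ℝ,
      til = Real.exp ((ui + ul) / 2) * lil ∧
      tlj = Real.exp ((ul + uj) / 2) * llj ∧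
      tjk = Real.exp ((uj + uk) / 2) * ljk ∧
      tki = Real.exp ((uk + ui) / 2) * lki ∧
      tij = Real.exp ((ui + uj) / 2) * lij) ↔
    (lil * ljk) / (llj * lki) = (til * tjk) / (tlj * tki) := by
  constructor
  · rintro ⟨ui, uj, uk, ul, h1, h2, h3, h4, h5⟩
    rw [h1, h2, h3, h4]
    rw [div_eq_div_iff (by positivity) (by positivity)]
    have key : Real.exp ((ul + uj) / 2) * Real.exp ((uk + ui) / 2) =
        Real.exp ((ui + ul) / 2) * Real.exp ((uj + uk) / 2) := by
      rw [← Real.exp_add, ← Real.exp_add]; ring_nf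
    linear_combination lil * ljk * llj * lki * key
  · intro h
    set a := Real.log (til / lil) with ha
    set b := Real.log (tlj / llj) with hb
    set c := Real.log (tjk / ljk) with hc
    set d := Real.log (tki / lki) with hd
    set e := Real.log (tij / lij) with he
    have key : a + c = b + d := by
      have h' : til / lil * (tjk / ljk) = tlj / llj * (tki / lki) := by
        field_simp at h ⊢
        nlinarith [h]
      have := congrArg Real.log h'
      rw [Real.log_mul (by positivity) (by positivity),
        Real.log_mul (by positivity) (by positivity)] at this
      linarith [this]
    refine ⟨e + d - c, e + c - d, c + d - e, 2 * a - e - d + c, ?_, ?_, ?_, ?_, ?_⟩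
    · have : (e + d - c + (2 * a - e - d + c)) / 2 = a := by ring
      rw [this, ha, Real.exp_log (by positivity)]
      field_simp
    · have : (2 * a - e - d + c + (e + c - d)) / 2 = b := by linarith [key]
      rw [this, hb, Real.exp_log (by positivity)]
      field_simp
    · have : (e + c - d + (c + d - e)) / 2 = c := by ring
      rw [this, hc, Real.exp_log (by positivity)]
      field_simp
    · have : (c + d - e + (e + d - c)) / 2 = d := by ring
      rw [this, hd, Real.exp_log (by positivity)]
      field_simp
    · have : (e + d - c + (e + c - d)) / 2 = e := by ring
      rw [this, he, Real.exp_log (by positivity)]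
      field_simp
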